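/- Let A_Γ = ⟨a_σ : σ ∈ Γ⟩ be a T-algebra, let x ∈ X(Γ,ℵ₀) with λ_x = dom(x) (an infinite countable limit ordinal), let e : ℕ → λ_x be a bijection, and let π : ℕ → ℕ be a permutation. Writing a^x_α = a_{x↾(α+1)}, define recursively c_n = a^x_{e(n)} ∖ ⋃_{k<n} c_k, set L_x = {n : c_n ≠ ∅}, and define Γ^x = Γ ∪ {x⌢σ : σ ∈ 2^{<ω}}, a_x = ∅, a_{x⌢(σ⌢0)} = ⋃{c_k : σ⌢1 ⊆ σ_{π(k)}}, and a_{x⌢(σ⌢1)} = ℕ ∖ a_{x⌢(σ⌢0)} for σ ∈ 2^{<ω}, where ⟨σ_k⟩ is the standard length-lexicographic enumeration of 2^{<ω}. If [σ] ∩ {σ_k : k ∈ π[L_x]} is nonempty for every σ ∈ 2^{<ω}, then the extended family A_Γ ∪ ⟨a_{x⌢σ} : σ ∈ 2^{<ω}⟩ is a T-algebra on Γ^x. -/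

import Mathlib

open Set

noncomputable section

/-- The least uncountable ordinal `ω₁`. -/
def omega1 : Ordinal := (Cardinal.aleph 1).ord

/-- `⋃_{γ ∈ F} a_γ` for a finite set `F` of indices. -/
def unionFin (a : Ordinal → Set ℕ) (F : Finset Ordinal) : Set ℕ :=
  ⋃ γ ∈ F, a γ

/-- A sequence of subsets of `ℕ`, with indices from a (downward closed) domain `D`
of ordinals, is coherent if for all `α ≤ β` in the domain there is a finite `F ⊆ α`
with `a α ∩ a β ⊆ ⋃_{γ∈F} a γ` or `a α ⊆ a β ∪ ⋃_{γ∈F} a γ`. -/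
def CoherentOn (D : Set Ordinal) (a : Ordinal → Set ℕ) : Prop :=
  ∀ α β : Ordinal, α ≤ β → β ∈ D →
    ∃ F : Finset Ordinal, (∀ γ ∈ F, γ < α) ∧
      (a α ∩ a β ⊆ unionFin a F ∨ a α ⊆ a β ∪ unionFin a F)

/-- Properness: no `a β` is contained in a finite union of earlier terms. -/
def ProperOn (D : Set Ordinal) (a : Ordinal → Set ℕ) : Prop :=
  ∀ β ∈ D, ∀ F : Finset Ordinal, (∀ γ ∈ F, γ < β) → ¬ a β ⊆ unionFin a F

/-- `â_β = { α ≤ β : a α ∖ a β ⊆ ⋃_{γ∈F} a γ for some finite F ⊆ α }`. -/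
def hatA (a : Ordinal → Set ℕ) (β : Ordinal) : Set Ordinal :=
  { α | α ≤ β ∧ ∃ F : Finset Ordinal, (∀ γ ∈ F, γ < α) ∧ a α \ a β ⊆ unionFin a F }

/-- The topology `τ(A)` on `λ + 1 = {α : α ≤ λ}` generated by the subbase
consisting of the sets `â_β` and their complements, `β < λ`. -/
def tau (lam : Ordinal) (a : Ordinal → Set ℕ) :
    TopologicalSpace {α : Ordinal // α ≤ lam} :=
  TopologicalSpace.generateFrom
    { s | ∃ β < lam, s = {x : {α : Ordinal // α ≤ lam} | x.1 ∈ hatA a β} ∨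
                     s = {x : {α : Ordinal // α ≤ lam} | x.1 ∈ hatA a β}ᶜ }

/-- The subspace `ω₁ = {α : α < ω₁}` of `(ω₁+1, τ(A))`. -/
def tauSub (a : Ordinal → Set ℕ) : TopologicalSpace {y : Ordinal // y < omega1} :=
  TopologicalSpace.induced
    (fun y : {y : Ordinal // y < omega1} => (⟨y.1, y.2.le⟩ : {α : Ordinal // α ≤ omega1}))
    (tau omega1 a)

/-- Closed unbounded subsets of `ω₁`. -/
def IsClubOmega1 (C : Set Ordinal) : Prop :=
  C ⊆ Iio omega1 ∧
  (∀ α < omega1, ∃ β ∈ C, α ≤ β) ∧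
  (∀ δ, δ < omega1 → δ ≠ 0 → (∀ α < δ, ∃ β ∈ C, α < β ∧ β < δ) → δ ∈ C)

/-- Stationary subsets of `ω₁`: sets meeting every club. -/
def IsStationaryOmega1 (S : Set Ordinal) : Prop :=
  ∀ C : Set Ordinal, IsClubOmega1 C → (S ∩ C).Nonempty

/-- The stationary covering property for a coherent sequence whose index domain is `D`:
if the sequence has length `ω₁` (i.e. `Iio ω₁ ⊆ D`), then every stationary `S ⊆ ω₁`
together with some finite `F` covers, i.e. `⋃_{γ ∈ S ∪ F} â_γ = ω₁`.  (Sequences of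
length `< ω₁` have the ScP by convention.) -/
def HasScP (D : Set Ordinal) (a : Ordinal → Set ℕ) : Prop :=
  Iio omega1 ⊆ D →
    ∀ S : Set Ordinal, S ⊆ Iio omega1 → IsStationaryOmega1 S →
      ∃ F : Finset Ordinal, (⋃ γ ∈ S ∪ (↑F : Set Ordinal), hatA a γ) = Iio omega1

/-- A node of the tree `2^{≤ω₁}`: a function `val` defined on the ordinals `< len`
(with the canonical value `false` beyond `len`). -/
structure Node where
  len : Ordinal
  val : Ordinal → Bool
  canon : ∀ α, len ≤ α → val α = false

open Classical in
/-- The restriction `x ↾ β`. -/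
def Node.restrict (x : Node) (β : Ordinal) : Node where
  len := β
  val := fun α => if α < β then x.val α else false
  canon := fun α h => if_neg (not_lt.2 h)

/-- `τ.Extends σ` means `σ ⊆ τ`, i.e. `τ` extends `σ`. -/
def Node.Extends (τ σ : Node) : Prop :=
  σ.len ≤ τ.len ∧ ∀ α < σ.len, τ.val α = σ.val α

/-- Successor ordinals. -/
def IsSucc (o : Ordinal) : Prop := ∃ β, o = β + 1

open Classical in
/-- `σ†`: if `σ` has successor length `β+1`, the node agreeing with `σ` except at `β`;
otherwise `σ` itself. -/
def Node.dagger (σ : Node) : Node :=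
  if h : IsSucc σ.len then
    { len := σ.len
      val := fun α => if α = Classical.choose h then !(σ.val α) else σ.val α
      canon := by
        intro α hα
        have hs := Classical.choose_spec h
        have hne : α ≠ Classical.choose h := by
          intro he
          rw [hs, he] at hα
          rw [Ordinal.add_one_eq_succ] at hα
          exact absurd hα (not_le.2 (Order.lt_succ (Classical.choose h)))
        show (if α = Classical.choose h then !(σ.val α) else σ.val α) = false
        rw [if_neg hne]
        exact σ.canon α hα }
  else σ

open Classical in
/-- `σ ⌢ b` : the node `σ` extended by one value `b`. -/
def Node.snoc (σ : Node) (b : Bool) : Node where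
  len := σ.len + 1
  val := fun α => if α = σ.len then b else σ.val α
  canon := by
    intro α hα
    have h1 : σ.len < α := by
      have h2 : σ.len < σ.len + 1 := by
        rw [Ordinal.add_one_eq_succ]; exact Order.lt_succ σ.len
      exact lt_of_lt_of_le h2 hα
    show (if α = σ.len then b else σ.val α) = false
    rw [if_neg h1.ne']
    exact σ.canon α h1.le

open Classical in
/-- `x ⌢ σ` : concatenation of nodes. -/
def Node.append (x σ : Node) : Node where
  len := x.len + σ.len
  val := fun α => if α < x.len then x.val α else σ.val (α - x.len)
  canon := by
    intro α hα
    have h1 : ¬ α < x.len := not_lt.2 (le_trans (le_add_of_nonneg_right (zero_le (a := σ.len))) hα)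
    show (if α < x.len then x.val α else σ.val (α - x.len)) = false
    rw [if_neg h1]
    apply σ.canon
    by_contra h2
    rw [not_le] at h2
    have h3 : α ≤ x.len + (α - x.len) := Ordinal.le_add_sub α x.len
    have h4 : x.len + (α - x.len) < x.len + σ.len := (add_lt_add_iff_left x.len).2 h2
    exact absurd hα (not_le.2 (lt_of_le_of_lt h3 h4))

/-- A subtree of `2^{<ω₁}` that is downward closed, twinned and has no maximal elements. -/
structure GoodTree (Γ : Set Node) : Prop where
  lt_omega1 : ∀ σ ∈ Γ, σ.len < omega1
  downward : ∀ σ ∈ Γ, ∀ β ≤ σ.len, σ.restrict β ∈ Γ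
  twinned : ∀ σ ∈ Γ, σ.dagger ∈ Γ
  noMax : ∀ σ ∈ Γ, ∃ τ ∈ Γ, σ.len < τ.len ∧ τ.Extends σ

/-- `X(Γ)`: the maximal branches of `Γ`, i.e. the minimal elements of `2^{≤ω₁} ∖ Γ`. -/
def XGamma (Γ : Set Node) : Set Node :=
  { x | x.len ≤ omega1 ∧ x ∉ Γ ∧ ∀ β < x.len, x.restrict β ∈ Γ }

/-- The index domain of the branch sequence `A_{Γ,x}`. -/
def branchDomain (Γ : Set Node) (x : Node) : Set Ordinal :=
  { α | α + 1 ≤ x.len ∧ x.restrict (α + 1) ∈ Γ }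

/-- The branch sequence `A_{Γ,x}`, `a^x_α = a_{x ↾ (α+1)}`. -/
def branchSeq (a : Node → Set ℕ) (x : Node) : Ordinal → Set ℕ :=
  fun α => a (x.restrict (α + 1))

/-- A `𝕋`-algebra on the tree `Γ`. -/
structure IsTAlgebra (Γ : Set Node) (a : Node → Set ℕ) : Prop where
  tree : GoodTree Γ
  empty_of_not_succ : ∀ σ ∈ Γ, ¬ IsSucc σ.len → a σ = ∅
  compl_dagger : ∀ σ ∈ Γ, IsSucc σ.len → a σ.dagger = (a σ)ᶜ
  branch_coherent : ∀ x : Node, x.len ≤ omega1 →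
    CoherentOn (branchDomain Γ x) (branchSeq a x)
  branch_proper : ∀ x : Node, x.len ≤ omega1 →
    ProperOn (branchDomain Γ x) (branchSeq a x)

/-- The Boolean subalgebra of `P(ℕ)` generated by a family `G`. -/
inductive GenBool (G : Set (Set ℕ)) : Set ℕ → Prop
  | basic (s : Set ℕ) : s ∈ G → GenBool G s
  | empty : GenBool G ∅
  | compl (s : Set ℕ) : GenBool G s → GenBool G sᶜ
  | inter (s t : Set ℕ) : GenBool G s → GenBool G t → GenBool G (s ∩ t)

/-- `B_Γ`: the Boolean subalgebra of `P(ℕ)` generated by `{a_σ : σ ∈ Γ}`. -/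
def BGamma (Γ : Set Node) (a : Node → Set ℕ) : Set (Set ℕ) :=
  { b | GenBool { s | ∃ σ ∈ Γ, s = a σ } b }

/-- A finite intersection from the family `{ℕ ∖ a_{x↾(α+1)} : α + 1 ≤ λ_x}`. -/
def finInterCompl (a : Node → Set ℕ) (x : Node) (F : Finset Ordinal) : Set ℕ :=
  ⋂ α ∈ F, (a (x.restrict (α + 1)))ᶜ

/-- The ultrafilter `U_x` on `B_Γ` generated by the finite intersections of
`{ℕ ∖ a_{x↾(α+1)} : α + 1 ≤ λ_x}`. -/
def Ux (Γ : Set Node) (a : Node → Set ℕ) (x : Node) : Set (Set ℕ) :=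
  { b | b ∈ BGamma Γ a ∧
    ∃ F : Finset Ordinal, (∀ α ∈ F, α + 1 ≤ x.len) ∧ finInterCompl a x F ⊆ b }

/-- The Stone topology on `X(Γ)`, with subbasic open sets `{z : b ∈ U_z}`, `b ∈ B_Γ`. -/
def stoneTop (Γ : Set Node) (a : Node → Set ℕ) :
    TopologicalSpace {z : Node // z ∈ XGamma Γ} :=
  TopologicalSpace.generateFrom
    { s | ∃ b ∈ BGamma Γ a, s = { z : {z : Node // z ∈ XGamma Γ} | b ∈ Ux Γ a z.1 } }

/-- An ultrafilter on a Boolean subalgebra `B` of `P(ℕ)`. -/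
def IsUltrafilterOn (B U : Set (Set ℕ)) : Prop :=
  U ⊆ B ∧
  (∀ s ∈ U, ∀ t ∈ U, s ∩ t ∈ U) ∧
  (∀ s ∈ U, ∀ t ∈ B, s ⊆ t → t ∈ U) ∧
  ∅ ∉ U ∧
  (∀ b ∈ B, Xor' (b ∈ U) (bᶜ ∈ U))

/-- The length-lexicographic (strict) order on finite binary strings. -/
def LenLexLT (σ τ : Node) : Prop :=
  σ.len < τ.len ∨ (σ.len = τ.len ∧ ∃ i < σ.len, σ.val i = false ∧ τ.val i = true ∧
    ∀ j < i, σ.val j = τ.val j)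

/-- `e` is the standard length-lexicographic enumeration of `2^{<ω}`. -/
def IsStdEnum (e : ℕ → Node) : Prop :=
  (∀ k, (e k).len < Ordinal.omega0) ∧
  (∀ σ : Node, σ.len < Ordinal.omega0 → ∃ k, e k = σ) ∧
  (∀ k l : ℕ, k < l → LenLexLT (e k) (e l))

/-- `⋃_{k<n} c^x_k` where `c^x_n = a^x_{e(n)} ∖ ⋃_{k<n} c^x_k` (recursively). -/
def cUnion (a : Node → Set ℕ) (x : Node) (eb : ℕ → Ordinal) : ℕ → Set ℕ
  | 0 => ∅
  | n + 1 => cUnion a x eb n ∪ (a (x.restrict (eb n + 1)) \ cUnion a x eb n)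

/-- `c^x_n = a^x_{e(n)} ∖ ⋃_{k<n} c^x_k`. -/
def cSeq (a : Node → Set ℕ) (x : Node) (eb : ℕ → Ordinal) (n : ℕ) : Set ℕ :=
  a (x.restrict (eb n + 1)) \ cUnion a x eb n

/-- `{x ⌢ σ : σ ∈ 2^{<ω}}`. -/
def appendSet (x : Node) : Set Node :=
  { τ | ∃ σ : Node, σ.len < Ordinal.omega0 ∧ τ = x.append σ }

/-- The defining equations of the extension `A_Γ[π,x]`:
`a_x = ∅`, `a_{x⌢(σ⌢0)} = ⋃{c^x_k : σ⌢1 ⊆ σ_{π(k)}}`, `a_{x⌢(σ⌢1)} = ℕ ∖ a_{x⌢(σ⌢0)}`. -/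
def ExtEquations (e : ℕ → Node) (π : ℕ → ℕ) (a : Node → Set ℕ) (x : Node)
    (eb : ℕ → Ordinal) (a' : Node → Set ℕ) : Prop :=
  a' x = ∅ ∧
  ∀ σ : Node, σ.len < Ordinal.omega0 →
    (a' (x.append (σ.snoc false)) =
      ⋃ k ∈ { k : ℕ | (e (π k)).Extends (σ.snoc true) }, cSeq a x eb k) ∧
    (a' (x.append (σ.snoc true)) = (a' (x.append (σ.snoc false)))ᶜ)

/-- The full tree `2^{<ω₁}`. -/
def GammaFull : Set Node := { σ | σ.len < omega1 }

theorem natLtOmega1 (n : ℕ) : (n : Ordinal) < omega1 := by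
  have h1 : (n : Ordinal) < Ordinal.omega0 := Ordinal.nat_lt_omega0 n
  have h2 : Ordinal.omega0 < omega1 := by
    rw [omega1, ← Cardinal.ord_aleph0]
    exact Cardinal.ord_lt_ord.2 (by rw [← Cardinal.aleph_zero]
                                    exact Cardinal.aleph_lt_aleph.2 zero_lt_one)
  exact h1.trans h2


namespace StAux

open Set

theorem Node.ext' {x y : Node} (hlen : x.len = y.len)
    (hval : ∀ α < x.len, x.val α = y.val α) : x = y := by
  obtain ⟨l, v, c⟩ := x
  obtain ⟨l', v', c'⟩ := y
  simp only [Node.len] at hlen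
  subst hlen
  have hv : v = v' := by
    funext α
    rcases lt_or_ge α l with h | h
    · exact hval α h
    · rw [c α h, c' α h]
  subst hv
  rfl

theorem restrict_len (x : Node) (β : Ordinal) : (x.restrict β).len = β := rfl

theorem restrict_val_lt {x : Node} {α β : Ordinal} (h : α < β) :
    (x.restrict β).val α = x.val α := if_pos h

theorem restrict_self (x : Node) : x.restrict x.len = x :=
  Node.ext' rfl fun α h => restrict_val_lt h

theorem restrict_restrict (x : Node) {β γ : Ordinal} (h : β ≤ γ) :
    (x.restrict γ).restrict β = x.restrict β := by
  refine Node.ext' rfl fun α hα => ?_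
  rw [restrict_len] at hα
  rw [restrict_val_lt hα, restrict_val_lt hα, restrict_val_lt (lt_of_lt_of_le hα h)]

theorem append_len (x σ : Node) : (x.append σ).len = x.len + σ.len := rfl

theorem append_val_lt {x σ : Node} {α : Ordinal} (h : α < x.len) :
    (x.append σ).val α = x.val α := if_pos h

theorem append_val_add (x σ : Node) (δ : Ordinal) :
    (x.append σ).val (x.len + δ) = σ.val δ := by
  show (if x.len + δ < x.len then x.val _ else σ.val (x.len + δ - x.len)) = σ.val δ
  rw [if_neg (not_lt.2 (le_add_of_nonneg_right (zero_le (a := _)))), Ordinal.add_sub_cancel]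

theorem append_nil {x σ : Node} (h : σ.len = 0) : x.append σ = x := by
  refine Node.ext' ?_ fun α hα => ?_
  · rw [append_len, h, add_zero]
  · rw [append_len, h, add_zero] at hα
    exact append_val_lt hα

/-- The empty node. -/
def nilNode : Node := ⟨0, fun _ => false, fun _ _ => rfl⟩

theorem append_nilNode (x : Node) : x.append nilNode = x := append_nil rfl

theorem restrict_append_le {x : Node} (σ : Node) {β : Ordinal} (h : β ≤ x.len) :
    (x.append σ).restrict β = x.restrict β := by
  refine Node.ext' rfl fun α hα => ?_
  rw [restrict_len] at hα
  rw [restrict_val_lt hα, restrict_val_lt hα, append_val_lt (lt_of_lt_of_le hα h)]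

theorem restrict_append_add {x σ : Node} {δ : Ordinal} (h : δ ≤ σ.len) :
    (x.append σ).restrict (x.len + δ) = x.append (σ.restrict δ) := by
  refine Node.ext' rfl fun α hα => ?_
  rw [restrict_len] at hα
  rw [restrict_val_lt hα]
  rcases lt_or_ge α x.len with h1 | h1
  · rw [append_val_lt h1, append_val_lt h1]
  · obtain ⟨ε, rfl⟩ : ∃ ε, α = x.len + ε := ⟨α - x.len, (Ordinal.add_sub_cancel_of_le h1).symm⟩
    have hε : ε < δ := by
      rwa [add_lt_add_iff_left] at hα
    rw [append_val_add, append_val_add, restrict_val_lt hε]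

theorem snoc_len (σ : Node) (b : Bool) : (σ.snoc b).len = σ.len + 1 := rfl

theorem snoc_val_last (σ : Node) (b : Bool) : (σ.snoc b).val σ.len = b := if_pos rfl

theorem snoc_val_lt {σ : Node} (b : Bool) {α : Ordinal} (h : α < σ.len) :
    (σ.snoc b).val α = σ.val α := if_neg h.ne

theorem snoc_decomp {σ : Node} {β : Ordinal} (h : σ.len = β + 1) :
    σ = (σ.restrict β).snoc (σ.val β) := by
  refine Node.ext' ?_ fun α hα => ?_
  · rw [snoc_len, restrict_len, h]
  · rw [h] at hα
    show σ.val α = if α = (σ.restrict β).len then σ.val β else (σ.restrict β).val α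
    rw [restrict_len]
    rcases eq_or_lt_of_le (show α ≤ β by
      rwa [Ordinal.add_one_eq_succ, Order.lt_succ_iff] at hα) with h1 | h1
    · rw [if_pos h1, h1]
    · rw [if_neg h1.ne, restrict_val_lt h1]

theorem succ_right_cancel {α β : Ordinal} (h : α + 1 = β + 1) : α = β := by
  rw [Ordinal.add_one_eq_succ, Ordinal.add_one_eq_succ] at h
  exact Order.succ_injective h

theorem dagger_append_snoc (x σ : Node) (b : Bool) :
    (x.append (σ.snoc b)).dagger = x.append (σ.snoc (!b)) := by
  have hlen : (x.append (σ.snoc b)).len = (x.len + σ.len) + 1 := by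
    rw [append_len, snoc_len, add_assoc]
  have hs : IsSucc (x.append (σ.snoc b)).len := ⟨x.len + σ.len, hlen⟩
  have hc : Classical.choose hs = x.len + σ.len :=
    succ_right_cancel ((Classical.choose_spec hs).symm.trans hlen)
  rw [Node.dagger, dif_pos hs]
  refine Node.ext' ?_ fun α hα => ?_
  · show (x.append (σ.snoc b)).len = _
    rw [append_len, append_len, snoc_len, snoc_len]
  · show (if α = Classical.choose hs then !((x.append (σ.snoc b)).val α)
      else (x.append (σ.snoc b)).val α) = (x.append (σ.snoc (!b))).val α
    rw [hc]
    rcases eq_or_ne α (x.len + σ.len) with h1 | h1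
    · rw [if_pos h1, h1, append_val_add, append_val_add, snoc_val_last, snoc_val_last]
    · rw [if_neg h1]
      have hα' : α < x.len + (σ.len + 1) := by
        have : α < (x.append (σ.snoc b)).len := hα
        rwa [append_len, snoc_len] at this
      rcases lt_or_ge α x.len with h2 | h2
      · rw [append_val_lt h2, append_val_lt h2]
      · obtain ⟨ε, rfl⟩ : ∃ ε, α = x.len + ε :=
          ⟨α - x.len, (Ordinal.add_sub_cancel_of_le h2).symm⟩
        have hε : ε ≠ σ.len := fun he => h1 (by rw [he])
        have hεlt : ε < σ.len := by
          rw [add_lt_add_iff_left, Ordinal.add_one_eq_succ, Order.lt_succ_iff] at hα'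
          exact lt_of_le_of_ne hα' hε
        rw [append_val_add, append_val_add, snoc_val_lt _ hεlt, snoc_val_lt _ hεlt]

theorem dagger_of_not_succ {σ : Node} (h : ¬ IsSucc σ.len) : σ.dagger = σ := dif_neg h

end StAux
namespace StAux

open Set

theorem extends_refl (σ : Node) : σ.Extends σ := ⟨le_rfl, fun _ _ => rfl⟩

theorem extends_trans {τ σ ρ : Node} (h1 : τ.Extends σ) (h2 : σ.Extends ρ) :
    τ.Extends ρ :=
  ⟨h2.1.trans h1.1, fun α hα => (h1.2 α (lt_of_lt_of_le hα h2.1)).trans (h2.2 α hα)⟩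

theorem snoc_extends (σ : Node) (b : Bool) : (σ.snoc b).Extends σ := by
  refine ⟨?_, fun α hα => snoc_val_lt b hα⟩
  rw [snoc_len]
  exact le_of_lt (by rw [Ordinal.add_one_eq_succ]; exact Order.lt_succ _)

/-- Two nodes disagreeing at a common position have no common extension. -/
theorem extends_incompat {ν σ1 σ2 : Node} {i : Ordinal}
    (h1 : ν.Extends σ1) (h2 : ν.Extends σ2) (hi1 : i < σ1.len) (hi2 : i < σ2.len)
    (hne : σ1.val i ≠ σ2.val i) : False :=
  hne ((h1.2 i hi1).symm.trans (h2.2 i hi2))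

/-- The finite "tail" of `y` above `x.len`, of length `m`. -/
def tNode (x y : Node) (m : ℕ) : Node where
  len := (m : Ordinal)
  val := fun i => if i < (m : Ordinal) then y.val (x.len + i) else false
  canon := fun α h => if_neg (not_lt.2 h)

theorem tNode_len (x y : Node) (m : ℕ) : (tNode x y m).len = (m : Ordinal) := rfl

theorem tNode_val {x y : Node} {m : ℕ} {i : Ordinal} (h : i < (m : Ordinal)) :
    (tNode x y m).val i = y.val (x.len + i) := if_pos h

theorem tNode_snoc_len (x y : Node) (m : ℕ) (b : Bool) :
    ((tNode x y m).snoc b).len = ((m + 1 : ℕ) : Ordinal) := by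
  rw [snoc_len, tNode_len, Nat.cast_succ]

/-- `y ↾ (x.len + m + 1) = x ⌢ ((tNode x y m) ⌢ y(x.len + m))`, provided `y` extends `x`. -/
theorem restrict_eq_append_tNode {x y : Node} (hyx : ∀ γ < x.len, y.val γ = x.val γ)
    (m : ℕ) : y.restrict (x.len + m + 1) = x.append ((tNode x y m).snoc (y.val (x.len + m))) := by
  refine Node.ext' ?_ fun α hα => ?_
  · rw [restrict_len, append_len, tNode_snoc_len, Nat.cast_succ, add_assoc]
  · rw [restrict_len] at hα
    rw [restrict_val_lt hα]
    rcases lt_or_ge α x.len with h1 | h1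
    · rw [append_val_lt h1]
      exact hyx α h1
    · obtain ⟨ε, rfl⟩ : ∃ ε, α = x.len + ε :=
        ⟨α - x.len, (Ordinal.add_sub_cancel_of_le h1).symm⟩
      rw [append_val_add]
      have hε : ε < (m : Ordinal) + 1 := by
        rwa [add_assoc, add_lt_add_iff_left] at hα
      rcases eq_or_lt_of_le (show ε ≤ (m : Ordinal) by
        rwa [Ordinal.add_one_eq_succ, Order.lt_succ_iff] at hε) with h2 | h2
      · subst h2
        rw [show ((m : ℕ) : Ordinal) = (tNode x y m).len from rfl, snoc_val_last]
      · rw [snoc_val_lt _ (by rwa [tNode_len]), tNode_val h2]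

/-- `tNode x y m` extends `(tNode x y d) ⌢ y(x.len + d)` for `d < m`. -/
theorem tNode_extends_snoc {x y : Node} {d m : ℕ} (h : d < m) :
    (tNode x y m).Extends ((tNode x y d).snoc (y.val (x.len + d))) := by
  constructor
  · rw [tNode_snoc_len, tNode_len]
    exact_mod_cast Nat.cast_le.2 h
  · intro α hα
    rw [tNode_snoc_len] at hα
    have hαm : α < (m : Ordinal) := lt_of_lt_of_le hα (by exact_mod_cast Nat.cast_le.2 h)
    rcases eq_or_lt_of_le (show α ≤ (d : Ordinal) by
        rw [Nat.cast_succ, Ordinal.add_one_eq_succ, Order.lt_succ_iff] at hα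
        exact hα) with h2 | h2
    · subst h2
      rw [tNode_val hαm, show ((d : ℕ) : Ordinal) = (tNode x y d).len from rfl, snoc_val_last]
    · rw [tNode_val hαm, snoc_val_lt _ (by rwa [tNode_len]), tNode_val h2]

/-! ### `cSeq` combinatorics -/

theorem cUnion_succ (a : Node → Set ℕ) (x : Node) (eb : ℕ → Ordinal) (n : ℕ) :
    cUnion a x eb (n + 1) = cUnion a x eb n ∪ cSeq a x eb n := rfl

theorem cUnion_mono (a : Node → Set ℕ) (x : Node) (eb : ℕ → Ordinal) :
    ∀ {m n : ℕ}, m ≤ n → cUnion a x eb m ⊆ cUnion a x eb n := by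
  intro m n h
  induction n with
  | zero => rw [Nat.le_zero.1 h]
  | succ n ih =>
    rcases Nat.lt_or_ge m (n+1) with h1 | h1
    · exact (ih (Nat.lt_succ_iff.1 h1)).trans subset_union_left
    · rw [Nat.le_antisymm h h1]

theorem a_subset_cUnion (a : Node → Set ℕ) (x : Node) (eb : ℕ → Ordinal) (n : ℕ) :
    a (x.restrict (eb n + 1)) ⊆ cUnion a x eb (n + 1) := by
  rw [cUnion_succ]
  intro p hp
  by_cases h : p ∈ cUnion a x eb n
  · exact Or.inl h
  · exact Or.inr ⟨hp, h⟩

theorem cSeq_disjoint_cUnion {a : Node → Set ℕ} {x : Node} {eb : ℕ → Ordinal} {n : ℕ}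
    {p : ℕ} (hp : p ∈ cSeq a x eb n) : p ∉ cUnion a x eb n := hp.2

theorem cSeq_subset_cUnion (a : Node → Set ℕ) (x : Node) (eb : ℕ → Ordinal) {k n : ℕ}
    (h : k < n) : cSeq a x eb k ⊆ cUnion a x eb n := by
  refine subset_trans ?_ (cUnion_mono a x eb h)
  rw [cUnion_succ]
  exact subset_union_right

theorem cSeq_injective {a : Node → Set ℕ} {x : Node} {eb : ℕ → Ordinal} {k j : ℕ}
    {p : ℕ} (hk : p ∈ cSeq a x eb k) (hj : p ∈ cSeq a x eb j) : k = j := by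
  rcases lt_trichotomy k j with h | h | h
  · exact absurd (cSeq_subset_cUnion a x eb h hk) hj.2
  · exact h
  · exact absurd (cSeq_subset_cUnion a x eb h hj) hk.2

theorem mem_cUnion_iff {a : Node → Set ℕ} {x : Node} {eb : ℕ → Ordinal} {n : ℕ} {p : ℕ} :
    p ∈ cUnion a x eb n ↔ ∃ k < n, p ∈ cSeq a x eb k := by
  induction n with
  | zero => simp [cUnion]
  | succ n ih =>
    rw [cUnion_succ]
    constructor
    · rintro (h | h)
      · obtain ⟨k, hk, hp⟩ := ih.1 h
        exact ⟨k, hk.trans (Nat.lt_succ_self n), hp⟩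
      · exact ⟨n, Nat.lt_succ_self n, h⟩
    · rintro ⟨k, hk, hp⟩
      rcases Nat.lt_or_ge k n with h1 | h1
      · exact Or.inl (ih.2 ⟨k, h1, hp⟩)
      · rw [Nat.le_antisymm (Nat.lt_succ_iff.1 hk) h1] at hp
        exact Or.inr hp

/-! ### `unionFin` lemmas -/

theorem mem_unionFin {f : Ordinal → Set ℕ} {F : Finset Ordinal} {p : ℕ} :
    p ∈ unionFin f F ↔ ∃ γ ∈ F, p ∈ f γ := by
  simp [unionFin]

theorem unionFin_congr {f g : Ordinal → Set ℕ} {F : Finset Ordinal}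
    (h : ∀ γ ∈ F, f γ = g γ) : unionFin f F = unionFin g F := by
  ext p
  rw [mem_unionFin, mem_unionFin]
  constructor <;> rintro ⟨γ, hγ, hp⟩
  · exact ⟨γ, hγ, (h γ hγ) ▸ hp⟩
  · exact ⟨γ, hγ, (h γ hγ).symm ▸ hp⟩

theorem unionFin_mono {f : Ordinal → Set ℕ} {F G : Finset Ordinal} (h : F ⊆ G) :
    unionFin f F ⊆ unionFin f G := fun p hp => by
  rw [mem_unionFin] at *
  obtain ⟨γ, h1, h2⟩ := hp
  exact ⟨γ, h h1, h2⟩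

theorem unionFin_singleton (f : Ordinal → Set ℕ) (γ : Ordinal) :
    unionFin f {γ} = f γ := by
  ext p; rw [mem_unionFin]; simp

theorem unionFin_empty (f : Ordinal → Set ℕ) : unionFin f ∅ = ∅ := by
  ext p; rw [mem_unionFin]; simp

end StAux
namespace StAux

open Set

theorem branchDomain_x {Γ : Set Node} {x : Node} (hx : x ∈ XGamma Γ)
    (hlim : Order.IsSuccLimit x.len) {γ : Ordinal} (h : γ < x.len) : γ ∈ branchDomain Γ x := by
  have h1 : γ + 1 < x.len := by
    rw [Ordinal.add_one_eq_succ]; exact hlim.succ_lt h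
  exact ⟨h1.le, hx.2.2 _ h1⟩

/-- `k` is "good" (for `α`): the part of `a^x_α` inside `c_k` is covered by
finitely many earlier terms. -/
def GoodF (a : Node → Set ℕ) (x : Node) (eb : ℕ → Ordinal) (α : Ordinal) (k : ℕ) : Prop :=
  ∃ F : Finset Ordinal, (∀ γ ∈ F, γ < α) ∧
    a (x.restrict (α + 1)) ∩ cSeq a x eb k ⊆ unionFin (branchSeq a x) F

theorem cSeq_subset_a (a : Node → Set ℕ) (x : Node) (eb : ℕ → Ordinal) (k : ℕ) :
    cSeq a x eb k ⊆ a (x.restrict (eb k + 1)) := fun _ h => h.1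

/-- Lemma A: modulo a finite union of earlier terms, `a^x_{eb n}` lies inside a
single cell `c_k`, `k ≤ n`. -/
theorem mainCover {Γ : Set Node} {a : Node → Set ℕ} {x : Node} {eb : ℕ → Ordinal}
    (hT : IsTAlgebra Γ a) (hx : x ∈ XGamma Γ) (hcount : x.len < omega1)
    (hlim : Order.IsSuccLimit x.len) (hebinj : Function.Injective eb) (hebran : ∀ n, eb n < x.len)
    (n : ℕ) :
    ∃ k ≤ n, ∃ F : Finset Ordinal, (∀ γ ∈ F, γ < eb n) ∧
      a (x.restrict (eb n + 1)) \ cSeq a x eb k ⊆ unionFin (branchSeq a x) F := by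
  classical
  set α := eb n with hαdef
  -- every k ≠ n is good or "dominating"
  have hgd : ∀ k, k ≠ n → GoodF a x eb α k ∨
      (∃ F : Finset Ordinal, (∀ γ ∈ F, γ < α) ∧
        a (x.restrict (α + 1)) ⊆ a (x.restrict (eb k + 1)) ∪ unionFin (branchSeq a x) F) := by
    intro k hk
    rcases lt_trichotomy (eb k) α with h | h | h
    · left
      refine ⟨{eb k}, ?_, ?_⟩
      · intro γ hγ
        rw [Finset.mem_singleton] at hγ
        exact hγ ▸ h
      · rw [unionFin_singleton]
        exact fun p hp => hp.2.1
    · exact absurd (hebinj h) hk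
    · obtain ⟨F, hF, hc⟩ := hT.branch_coherent x hcount.le α (eb k) h.le
        (branchDomain_x hx hlim (hebran k))
      rcases hc with hc | hc
      · exact Or.inl ⟨F, hF, fun p hp => hc ⟨hp.1, hp.2.1⟩⟩
      · exact Or.inr ⟨F, hF, hc⟩
  -- a choice of witnessing finite sets for good k
  have hsel : ∀ k : ℕ, ∃ F : Finset Ordinal, GoodF a x eb α k →
      (∀ γ ∈ F, γ < α) ∧
        a (x.restrict (α + 1)) ∩ cSeq a x eb k ⊆ unionFin (branchSeq a x) F := by
    intro k
    by_cases h : GoodF a x eb α k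
    · obtain ⟨F, h1, h2⟩ := h
      exact ⟨F, fun _ => ⟨h1, h2⟩⟩
    · exact ⟨∅, fun hh => absurd hh h⟩
  choose Fk hFk using hsel
  by_cases hall : ∀ k, k < n → GoodF a x eb α k
  · refine ⟨n, le_rfl, (Finset.range n).biUnion Fk, ?_, ?_⟩
    · intro γ hγ
      rw [Finset.mem_biUnion] at hγ
      obtain ⟨k, hk, hγ⟩ := hγ
      exact (hFk k (hall k (Finset.mem_range.1 hk))).1 γ hγ
    · intro p hp
      have h1 : p ∈ cUnion a x eb n := by
        by_contra h
        exact hp.2 ⟨hp.1, h⟩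
      obtain ⟨k, hk, hpk⟩ := mem_cUnion_iff.1 h1
      exact unionFin_mono (Finset.subset_biUnion_of_mem Fk (Finset.mem_range.2 hk))
        ((hFk k (hall k hk)).2 ⟨hp.1, hpk⟩)
  · push_neg at hall
    obtain ⟨k1, hk1n, hk1⟩ := hall
    have hex : ∃ k, k < n ∧ ¬ GoodF a x eb α k := ⟨k1, hk1n, hk1⟩
    set k0 := Nat.find hex with hk0def
    obtain ⟨hk0n, hk0bad⟩ : k0 < n ∧ ¬ GoodF a x eb α k0 := Nat.find_spec hex
    have hk0min : ∀ k, k < k0 → GoodF a x eb α k := by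
      intro k hk
      by_contra h
      exact Nat.find_min hex hk ⟨hk.trans hk0n, h⟩
    obtain ⟨F0, hF0, hdom⟩ := (hgd k0 (Nat.ne_of_lt hk0n)).resolve_left hk0bad
    have hgood_gt : ∀ k, k0 < k → GoodF a x eb α k := by
      intro k hk
      refine ⟨F0, hF0, fun p hp => ?_⟩
      rcases hdom hp.1 with h | h
      · exact absurd ((cUnion_mono a x eb hk) ((a_subset_cUnion a x eb k0) h)) hp.2.2
      · exact h
    refine ⟨k0, hk0n.le, ((Finset.range (n+1)).erase k0).biUnion Fk, ?_, ?_⟩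
    · intro γ hγ
      rw [Finset.mem_biUnion] at hγ
      obtain ⟨k, hk, hγ⟩ := hγ
      have hkgood : GoodF a x eb α k := by
        obtain ⟨hne, _⟩ := Finset.mem_erase.1 hk
        rcases lt_trichotomy k k0 with h | h | h
        · exact hk0min k h
        · exact absurd h hne
        · exact hgood_gt k h
      exact (hFk k hkgood).1 γ hγ
    · intro p hp
      have h1 : p ∈ cUnion a x eb (n + 1) := a_subset_cUnion a x eb n hp.1
      obtain ⟨k, hk, hpk⟩ := mem_cUnion_iff.1 h1
      have hne : k ≠ k0 := fun h => hp.2 (h ▸ hpk)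
      have hkgood : GoodF a x eb α k := by
        rcases lt_trichotomy k k0 with h | h | h
        · exact hk0min k h
        · exact absurd h hne
        · exact hgood_gt k h
      refine unionFin_mono (Finset.subset_biUnion_of_mem Fk ?_) ((hFk k hkgood).2 ⟨hp.1, hpk⟩)
      exact Finset.mem_erase.2 ⟨hne, Finset.mem_range.2 hk⟩

/-- Cell-splitting: a union of cells contains or misses each cell. -/
theorem cellSplit_union (a : Node → Set ℕ) (x : Node) (eb : ℕ → Ordinal) (S : Set ℕ) :
    ∀ j, cSeq a x eb j ⊆ (⋃ k ∈ S, cSeq a x eb k) ∨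
      ∀ p ∈ cSeq a x eb j, p ∉ (⋃ k ∈ S, cSeq a x eb k) := by
  intro j
  by_cases h : j ∈ S
  · exact Or.inl (subset_biUnion_of_mem h)
  · right
    intro p hp hmem
    rw [mem_iUnion₂] at hmem
    obtain ⟨k, hk, hpk⟩ := hmem
    exact h ((cSeq_injective hp hpk) ▸ hk)

theorem cellSplit_compl {a : Node → Set ℕ} {x : Node} {eb : ℕ → Ordinal} {A : Set ℕ}
    (h : ∀ j, cSeq a x eb j ⊆ A ∨ ∀ p ∈ cSeq a x eb j, p ∉ A) :
    ∀ j, cSeq a x eb j ⊆ Aᶜ ∨ ∀ p ∈ cSeq a x eb j, p ∉ Aᶜ := by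
  intro j
  rcases h j with h1 | h1
  · exact Or.inr fun p hp hc => hc (h1 hp)
  · exact Or.inl fun p hp => h1 p hp

/-- Coherence of an old term with any cell-split set. -/
theorem cohNewOld {Γ : Set Node} {a : Node → Set ℕ} {x : Node} {eb : ℕ → Ordinal}
    (hT : IsTAlgebra Γ a) (hx : x ∈ XGamma Γ) (hcount : x.len < omega1)
    (hlim : Order.IsSuccLimit x.len) (hebinj : Function.Injective eb) (hebran : ∀ n, eb n < x.len)
    (hebsurj : ∀ α < x.len, ∃ n, eb n = α) {α : Ordinal} (hα : α < x.len) {A : Set ℕ}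
    (hcell : ∀ j, cSeq a x eb j ⊆ A ∨ ∀ p ∈ cSeq a x eb j, p ∉ A) :
    ∃ F : Finset Ordinal, (∀ γ ∈ F, γ < α) ∧
      (a (x.restrict (α + 1)) ∩ A ⊆ unionFin (branchSeq a x) F ∨
       a (x.restrict (α + 1)) ⊆ A ∪ unionFin (branchSeq a x) F) := by
  obtain ⟨n, rfl⟩ := hebsurj α hα
  obtain ⟨k, _, F, hF, hcov⟩ := mainCover hT hx hcount hlim hebinj hebran n
  rcases hcell k with h | h
  · refine ⟨F, hF, Or.inr fun p hp => ?_⟩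
    by_cases hpc : p ∈ cSeq a x eb k
    · exact Or.inl (h hpc)
    · exact Or.inr (hcov ⟨hp, hpc⟩)
  · refine ⟨F, hF, Or.inl fun p hp => ?_⟩
    by_cases hpc : p ∈ cSeq a x eb k
    · exact absurd hp.2 (h p hpc)
    · exact hcov ⟨hp.1, hpc⟩

end StAux
namespace StAux

open Set

theorem extends_snoc_ne {ν ρ : Node} {b b' : Bool}
    (h1 : ν.Extends (ρ.snoc b)) (h2 : ν.Extends (ρ.snoc b')) : b = b' := by
  have hl : ρ.len < (ρ.snoc b).len := by
    rw [snoc_len, Ordinal.add_one_eq_succ]; exact Order.lt_succ _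
  have hl' : ρ.len < (ρ.snoc b').len := by
    rw [snoc_len, Ordinal.add_one_eq_succ]; exact Order.lt_succ _
  have e1 := h1.2 ρ.len hl
  have e2 := h2.2 ρ.len hl'
  rw [snoc_val_last] at e1 e2
  rw [← e1, ← e2]

/-- The set `⋃ {c_k : σ_{π k} ⊇ ρ⌢1}`. -/
def CsSet (e : ℕ → Node) (π : ℕ → ℕ) (a : Node → Set ℕ) (x : Node) (eb : ℕ → Ordinal)
    (ρ : Node) : Set ℕ :=
  ⋃ k ∈ { k : ℕ | (e (π k)).Extends (ρ.snoc true) }, cSeq a x eb k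

theorem subset_CsSet {e : ℕ → Node} {π : ℕ → ℕ} {a : Node → Set ℕ} {x : Node}
    {eb : ℕ → Ordinal} {ρ : Node} {k : ℕ} (h : (e (π k)).Extends (ρ.snoc true)) :
    cSeq a x eb k ⊆ CsSet e π a x eb ρ :=
  subset_biUnion_of_mem h

theorem of_mem_CsSet {e : ℕ → Node} {π : ℕ → ℕ} {a : Node → Set ℕ} {x : Node}
    {eb : ℕ → Ordinal} {ρ : Node} {k p : ℕ} (hp : p ∈ cSeq a x eb k)
    (h : p ∈ CsSet e π a x eb ρ) : (e (π k)).Extends (ρ.snoc true) := by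
  rw [CsSet, mem_iUnion₂] at h
  obtain ⟨k', hk', hpk'⟩ := h
  simp only [Set.mem_setOf_eq] at hk'
  rwa [show k' = k from cSeq_injective hpk' hp] at hk'

theorem CsSet_cellSplit (e : ℕ → Node) (π : ℕ → ℕ) (a : Node → Set ℕ) (x : Node)
    (eb : ℕ → Ordinal) (ρ : Node) :
    ∀ j, cSeq a x eb j ⊆ CsSet e π a x eb ρ ∨
      ∀ p ∈ cSeq a x eb j, p ∉ CsSet e π a x eb ρ :=
  cellSplit_union a x eb _

section NewVal

variable {Γ : Set Node} {a : Node → Set ℕ} {x : Node} {eb : ℕ → Ordinal}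
  {e : ℕ → Node} {π : ℕ → ℕ} {a' : Node → Set ℕ} {y : Node}

theorem newVal_false (heq : ExtEquations e π a x eb a')
    (hyx : ∀ γ < x.len, y.val γ = x.val γ) {m : ℕ} (hb : y.val (x.len + m) = false) :
    branchSeq a' y (x.len + m) = CsSet e π a x eb (tNode x y m) := by
  show a' (y.restrict (x.len + m + 1)) = _
  rw [restrict_eq_append_tNode hyx m, hb]
  exact (heq.2 (tNode x y m) (by rw [tNode_len]; exact Ordinal.nat_lt_omega0 m)).1

theorem newVal_true (heq : ExtEquations e π a x eb a')
    (hyx : ∀ γ < x.len, y.val γ = x.val γ) {m : ℕ} (hb : y.val (x.len + m) = true) :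
    branchSeq a' y (x.len + m) = (CsSet e π a x eb (tNode x y m))ᶜ := by
  show a' (y.restrict (x.len + m + 1)) = _
  rw [restrict_eq_append_tNode hyx m, hb]
  have h2 := (heq.2 (tNode x y m) (by rw [tNode_len]; exact Ordinal.nat_lt_omega0 m))
  rw [h2.2, h2.1]
  rfl

theorem oldVal (hx : x ∈ XGamma Γ) (hlim : Order.IsSuccLimit x.len) (haΓ : ∀ σ ∈ Γ, a' σ = a σ)
    (hyx : ∀ γ < x.len, y.val γ = x.val γ) {γ : Ordinal} (h : γ < x.len) :
    y.restrict (γ + 1) = x.restrict (γ + 1) ∧ x.restrict (γ + 1) ∈ Γ ∧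
      branchSeq a' y γ = branchSeq a x γ := by
  have h1 : γ + 1 < x.len := by
    rw [Ordinal.add_one_eq_succ]; exact hlim.succ_lt h
  have h2 : y.restrict (γ + 1) = x.restrict (γ + 1) := by
    refine Node.ext' rfl fun δ hδ => ?_
    rw [restrict_len] at hδ
    rw [restrict_val_lt hδ, restrict_val_lt hδ]
    exact hyx δ (hδ.trans h1)
  have h3 : x.restrict (γ + 1) ∈ Γ := hx.2.2 _ h1
  refine ⟨h2, h3, ?_⟩
  show a' (y.restrict (γ + 1)) = a (x.restrict (γ + 1))
  rw [h2]
  exact haΓ _ h3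

theorem y_restrict_xlen (hyx : ∀ γ < x.len, y.val γ = x.val γ) :
    y.restrict x.len = x := by
  refine Node.ext' rfl fun δ hδ => ?_
  have hδ' : δ < x.len := hδ
  rw [restrict_val_lt hδ']
  exact hyx δ hδ'

theorem notGamma (hT : IsTAlgebra Γ a) (hx : x ∈ XGamma Γ)
    (hyx : ∀ γ < x.len, y.val γ = x.val γ) {β : Ordinal} (hβ : x.len ≤ β) :
    y.restrict β ∉ Γ := by
  intro h
  have h1 := hT.tree.downward _ h x.len (by rw [restrict_len]; exact hβ)
  rw [restrict_restrict y hβ, y_restrict_xlen hyx] at h1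
  exact hx.2.1 h1

theorem newIndex (hT : IsTAlgebra Γ a) (hx : x ∈ XGamma Γ) (hlim : Order.IsSuccLimit x.len)
    (hyx : ∀ γ < x.len, y.val γ = x.val γ) {β : Ordinal}
    (hD : β ∈ branchDomain (Γ ∪ appendSet x) y) (hβ : x.len ≤ β) :
    ∃ m : ℕ, β = x.len + m := by
  rcases hD.2 with h | h
  · exact absurd h (notGamma hT hx hyx (hβ.trans (le_of_lt (by
      rw [Ordinal.add_one_eq_succ]; exact Order.lt_succ β))))
  · obtain ⟨σ, hσfin, hσ⟩ := h
    have hlen : β + 1 = x.len + σ.len := by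
      have := congrArg Node.len hσ
      rwa [restrict_len, append_len] at this
    obtain ⟨s, hs⟩ := Ordinal.lt_omega0.1 hσfin
    rcases s with _ | t
    · rw [hs, Nat.cast_zero, add_zero] at hlen
      exfalso
      have : β < x.len := by rw [← hlen, Ordinal.add_one_eq_succ]; exact Order.lt_succ β
      have h2 := hlim.succ_lt this
      rw [← Ordinal.add_one_eq_succ, hlen] at h2
      exact lt_irrefl _ h2
    · refine ⟨t, succ_right_cancel ?_⟩
      rw [hlen, hs, Nat.cast_succ, ← add_assoc]

/-- Disjointness of a new branch value from all later `CsSet`s along the branch. -/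
theorem newNewDisjoint (heq : ExtEquations e π a x eb a')
    (hyx : ∀ γ < x.len, y.val γ = x.val γ) {d m : ℕ} (hdm : d < m) :
    ∀ p ∈ branchSeq a' y (x.len + d), p ∉ CsSet e π a x eb (tNode x y m) := by
  intro p hpd hpm
  rw [CsSet, mem_iUnion₂] at hpm
  obtain ⟨k, hkS, hpk⟩ := hpm
  have hchain : (e (π k)).Extends ((tNode x y d).snoc (y.val (x.len + d))) :=
    extends_trans (extends_trans hkS (snoc_extends _ _)) (tNode_extends_snoc hdm)
  cases hb : y.val (x.len + d) with
  | false =>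
    rw [newVal_false heq hyx hb] at hpd
    have h1 := of_mem_CsSet hpk hpd
    rw [hb] at hchain
    exact Bool.noConfusion (extends_snoc_ne h1 hchain)
  | true =>
    rw [newVal_true heq hyx hb] at hpd
    rw [hb] at hchain
    exact hpd (subset_CsSet hchain hpk)

end NewVal

/-- A node of length `L` extending `σ` by `false`s. -/
def padNode (σ : Node) (L : ℕ) : Node where
  len := (L : Ordinal)
  val := fun i => if i < σ.len ∧ i < (L : Ordinal) then σ.val i else false
  canon := fun α h => if_neg fun hc => absurd hc.2 (not_lt.2 h)

theorem padNode_len (σ : Node) (L : ℕ) : (padNode σ L).len = (L : Ordinal) := rfl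

theorem padNode_extends {σ : Node} {L : ℕ} (h : σ.len ≤ (L : Ordinal)) :
    (padNode σ L).Extends σ :=
  ⟨h, fun i hi => if_pos ⟨hi, lt_of_lt_of_le hi h⟩⟩

end StAux
namespace StAux

open Set

theorem properNew {Γ : Set Node} {a : Node → Set ℕ} {x : Node} {eb : ℕ → Ordinal}
    {e : ℕ → Node} {π : ℕ → ℕ} {a' : Node → Set ℕ} {y : Node}
    (hx : x ∈ XGamma Γ) (hlim : Order.IsSuccLimit x.len)
    (hebsurj : ∀ α < x.len, ∃ n, eb n = α) (he : IsStdEnum e)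
    (hL : ∀ σ : Node, σ.len < Ordinal.omega0 →
      ∃ j ∈ π '' { n : ℕ | cSeq a x eb n ≠ ∅ }, (e j).Extends σ)
    (haΓ : ∀ σ ∈ Γ, a' σ = a σ) (heq : ExtEquations e π a x eb a')
    (hyx : ∀ γ < x.len, y.val γ = x.val γ) (m : ℕ) (F : Finset Ordinal)
    (hF : ∀ γ ∈ F, γ < x.len + m) :
    ¬ branchSeq a' y (x.len + m) ⊆ unionFin (branchSeq a' y) F := by
  classical
  intro hsub
  -- pick an index of `eb` for each old ordinal
  have hnsel : ∀ γ : Ordinal, ∃ n : ℕ, γ < x.len → eb n = γ := by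
    intro γ
    by_cases h : γ < x.len
    · obtain ⟨n, hn⟩ := hebsurj γ h
      exact ⟨n, fun _ => hn⟩
    · exact ⟨0, fun hc => absurd hc h⟩
  choose nsel hnsel_spec using hnsel
  set N : ℕ := F.sup nsel + 1 with hNdef
  -- lengths of the enumerated strings
  have hlen' : ∀ j : ℕ, ∃ L : ℕ, (e j).len = (L : Ordinal) := fun j =>
    Ordinal.lt_omega0.1 (he.1 j)
  choose natLen hnatLen using hlen'
  set L : ℕ := ((Finset.range N).sup fun k => natLen (π k)) + (m + 2) with hLdef
  have hLm : m + 1 ≤ L := by omega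
  have hLgt : ∀ k, k < N → natLen (π k) < L := by
    intro k hk
    have h1 : natLen (π k) ≤ (Finset.range N).sup fun k => natLen (π k) :=
      Finset.le_sup (f := fun k => natLen (π k)) (Finset.mem_range.2 hk)
    omega
  set b := y.val (x.len + m) with hbdef
  -- the target string
  obtain ⟨j, hj, hext⟩ := hL (padNode ((tNode x y m).snoc (!b)) L)
    (by rw [padNode_len]; exact Ordinal.nat_lt_omega0 L)
  obtain ⟨k, hck, rfl⟩ := hj
  have hck : cSeq a x eb k ≠ ∅ := hck
  have hkext : (e (π k)).Extends ((tNode x y m).snoc (!b)) :=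
    extends_trans hext (padNode_extends (by
      rw [tNode_snoc_len]
      exact_mod_cast Nat.cast_le.2 hLm))
  have hkN : N ≤ k := by
    by_contra h
    push_neg at h
    have h1 : (L : Ordinal) ≤ (e (π k)).len := by
      rw [← padNode_len ((tNode x y m).snoc (!b)) L]
      exact hext.1
    rw [hnatLen (π k)] at h1
    exact absurd (hLgt k h) (not_lt.2 (by exact_mod_cast h1))
  obtain ⟨p, hp⟩ := Set.nonempty_iff_ne_empty.2 hck
  -- `p` belongs to the new set
  have hpA : p ∈ branchSeq a' y (x.len + m) := by
    cases hb : b with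
    | false =>
      rw [hbdef] at hb
      rw [newVal_false heq hyx hb]
      refine subset_CsSet ?_ hp
      rw [hbdef, hb] at hkext
      exact hkext
    | true =>
      rw [hbdef] at hb
      rw [newVal_true heq hyx hb]
      intro hmem
      have h1 := of_mem_CsSet hp hmem
      rw [hbdef, hb] at hkext
      exact Bool.noConfusion (extends_snoc_ne h1 hkext)
  obtain ⟨γ, hγF, hpγ⟩ := mem_unionFin.1 (hsub hpA)
  rcases lt_or_ge γ x.len with hγx | hγx
  · -- `γ` is an old index: its term is contained in `cUnion k`
    obtain ⟨_, _, hval⟩ := oldVal hx hlim haΓ hyx hγx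
    rw [hval] at hpγ
    have h1 : p ∈ cUnion a x eb (nsel γ + 1) := by
      apply a_subset_cUnion
      rw [hnsel_spec γ hγx]
      exact hpγ
    have h2 : nsel γ + 1 ≤ k :=
      le_trans (Nat.succ_le_succ (Finset.le_sup hγF)) hkN
    exact hp.2 (cUnion_mono a x eb h2 h1)
  · -- `γ` is a new index below `x.len + m`
    have hγlt : γ < x.len + m := hF γ hγF
    obtain ⟨δ, rfl⟩ : ∃ δ, γ = x.len + δ :=
      ⟨γ - x.len, (Ordinal.add_sub_cancel_of_le hγx).symm⟩
    have hδm : δ < (m : Ordinal) := by rwa [add_lt_add_iff_left] at hγlt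
    obtain ⟨d, rfl⟩ := Ordinal.lt_omega0.1 (hδm.trans (Ordinal.nat_lt_omega0 m))
    have hdm : d < m := by exact_mod_cast hδm
    have hchain : (e (π k)).Extends ((tNode x y d).snoc (y.val (x.len + d))) :=
      extends_trans (extends_trans hkext (snoc_extends _ _)) (tNode_extends_snoc hdm)
    cases hb'' : y.val (x.len + d) with
    | false =>
      rw [newVal_false heq hyx hb''] at hpγ
      have h1 := of_mem_CsSet hp hpγ
      rw [hb''] at hchain
      exact Bool.noConfusion (extends_snoc_ne h1 hchain)
    | true =>
      rw [newVal_true heq hyx hb''] at hpγ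
      rw [hb''] at hchain
      exact hpγ (subset_CsSet hchain hp)

end StAux
namespace StAux

open Set

theorem omega0_lt_omega1 : Ordinal.omega0 < omega1 := by
  rw [omega1, ← Cardinal.ord_aleph0]
  refine Cardinal.ord_lt_ord.2 ?_
  rw [← Cardinal.aleph_zero]
  exact Cardinal.aleph_lt_aleph.2 zero_lt_one

theorem add_lt_omega1 {α β : Ordinal} (h1 : α < omega1) (h2 : β < omega1) :
    α + β < omega1 := by
  rw [omega1] at *
  exact Ordinal.isPrincipal_add_ord (Cardinal.aleph0_le_aleph 1) h1 h2

theorem nat_succ_lt_omega0 (t : Ordinal) (h : t < Ordinal.omega0) :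
    t + 1 < Ordinal.omega0 := by
  rw [Ordinal.add_one_eq_succ]
  exact Ordinal.isSuccLimit_omega0.succ_lt h

theorem x_mem_appendSet (x : Node) : x ∈ appendSet x :=
  ⟨nilNode, Ordinal.omega0_pos, (append_nilNode x).symm⟩

theorem not_isSucc_of_isLimit {o : Ordinal} (h : Order.IsSuccLimit o) : ¬ IsSucc o := by
  rintro ⟨β, rfl⟩
  have := h.succ_lt (show β < β + 1 by
    rw [Ordinal.add_one_eq_succ]; exact Order.lt_succ β)
  rw [← Ordinal.add_one_eq_succ] at this
  exact lt_irrefl _ this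

theorem goodTreeExt {Γ : Set Node} {a : Node → Set ℕ} {x : Node}
    (hT : IsTAlgebra Γ a) (hx : x ∈ XGamma Γ) (hcount : x.len < omega1)
    (hlim : Order.IsSuccLimit x.len) : GoodTree (Γ ∪ appendSet x) := by
  constructor
  · rintro σ (h | ⟨ρ, hρ, rfl⟩)
    · exact hT.tree.lt_omega1 σ h
    · rw [append_len]
      exact add_lt_omega1 hcount (hρ.trans omega0_lt_omega1)
  · rintro σ (h | ⟨ρ, hρfin, rfl⟩) β hβ
    · exact Or.inl (hT.tree.downward σ h β hβ)
    · rw [append_len] at hβ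
      rcases le_or_gt β x.len with h1 | h1
      · rw [restrict_append_le _ h1]
        rcases eq_or_lt_of_le h1 with h2 | h2
        · subst h2
          rw [restrict_self]
          exact Or.inr (x_mem_appendSet x)
        · exact Or.inl (hx.2.2 β h2)
      · obtain ⟨δ, rfl⟩ : ∃ δ, β = x.len + δ :=
          ⟨β - x.len, (Ordinal.add_sub_cancel_of_le h1.le).symm⟩
        have hδ : δ ≤ ρ.len := by rwa [add_le_add_iff_left] at hβ
        rw [restrict_append_add hδ]
        exact Or.inr ⟨ρ.restrict δ, by rw [restrict_len]; exact lt_of_le_of_lt hδ hρfin, rfl⟩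
  · rintro σ (h | ⟨ρ, hρfin, rfl⟩)
    · exact Or.inl (hT.tree.twinned σ h)
    · obtain ⟨s, hs⟩ := Ordinal.lt_omega0.1 hρfin
      rcases s with _ | t
      · rw [Nat.cast_zero] at hs
        rw [append_nil hs, dagger_of_not_succ (not_isSucc_of_isLimit hlim)]
        exact Or.inr (x_mem_appendSet x)
      · have hρ1 : ρ.len = (t : Ordinal) + 1 := by rw [hs, Nat.cast_succ]
        rw [snoc_decomp hρ1, dagger_append_snoc]
        refine Or.inr ⟨(ρ.restrict t).snoc (!ρ.val t), ?_, rfl⟩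
        rw [snoc_len, restrict_len]
        exact nat_succ_lt_omega0 _ (Ordinal.nat_lt_omega0 t)
  · rintro σ (h | ⟨ρ, hρfin, rfl⟩)
    · obtain ⟨τ, hτ, h1, h2⟩ := hT.tree.noMax σ h
      exact ⟨τ, Or.inl hτ, h1, h2⟩
    · have hlt : ρ.len < (ρ.snoc false).len := by
        rw [snoc_len, Ordinal.add_one_eq_succ]
        exact Order.lt_succ _
      refine ⟨x.append (ρ.snoc false),
        Or.inr ⟨ρ.snoc false, by rw [snoc_len]; exact nat_succ_lt_omega0 _ hρfin, rfl⟩, ?_, ?_, ?_⟩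
      · rw [append_len, append_len]
        exact (add_lt_add_iff_left x.len).2 hlt
      · rw [append_len, append_len]
        exact ((add_lt_add_iff_left x.len).2 hlt).le
      · intro α hα
        rw [append_len] at hα
        rcases lt_or_ge α x.len with h1 | h1
        · rw [append_val_lt h1, append_val_lt h1]
        · obtain ⟨δ, rfl⟩ : ∃ δ, α = x.len + δ :=
            ⟨α - x.len, (Ordinal.add_sub_cancel_of_le h1).symm⟩
          have hδ : δ < ρ.len := by rwa [add_lt_add_iff_left] at hα
          rw [append_val_add, append_val_add, snoc_val_lt _ hδ]

end StAux
open StAux in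
/-- Extending a `𝕋`-algebra through a countable maximal branch `x ∈ X(Γ,ℵ₀)` via a
bijection `e : ℕ → λ_x`, a permutation `π` and the sets `c_n`: if
`[σ] ∩ {σ_k : k ∈ π[L_x]} ≠ ∅` for every `σ ∈ 2^{<ω}`, then the extended family is
a `𝕋`-algebra on `Γ^x = Γ ∪ {x⌢σ : σ ∈ 2^{<ω}}`. -/
theorem stmt13 (Γ : Set Node) (a : Node → Set ℕ) (hT : IsTAlgebra Γ a)
    (x : Node) (hx : x ∈ XGamma Γ) (hcount : x.len < omega1)
    (hinf : Ordinal.omega0 ≤ x.len) (hlim : Order.IsSuccLimit x.len)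
    (eb : ℕ → Ordinal) (hebinj : Function.Injective eb)
    (hebran : ∀ n, eb n < x.len) (hebsurj : ∀ α < x.len, ∃ n, eb n = α)
    (π : ℕ → ℕ) (hπ : Function.Bijective π)
    (e : ℕ → Node) (he : IsStdEnum e)
    (hL : ∀ σ : Node, σ.len < Ordinal.omega0 →
      ∃ j ∈ π '' { n : ℕ | cSeq a x eb n ≠ ∅ }, (e j).Extends σ)
    (a' : Node → Set ℕ) (haΓ : ∀ σ ∈ Γ, a' σ = a σ)
    (heq : ExtEquations e π a x eb a') :
    IsTAlgebra (Γ ∪ appendSet x) a' := by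
  classical
  refine ⟨goodTreeExt hT hx hcount hlim, ?_, ?_, ?_, ?_⟩
  · -- empty_of_not_succ
    rintro σ (h | ⟨ρ, hρfin, rfl⟩) hns
    · rw [haΓ σ h]
      exact hT.empty_of_not_succ σ h hns
    · obtain ⟨s, hs⟩ := Ordinal.lt_omega0.1 hρfin
      rcases s with _ | t
      · rw [Nat.cast_zero] at hs
        rw [append_nil hs]
        exact heq.1
      · exact absurd ⟨x.len + t, by rw [append_len, hs, Nat.cast_succ, ← add_assoc]⟩ hns
  · -- compl_dagger
    rintro σ (h | ⟨ρ, hρfin, rfl⟩) hsucc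
    · rw [haΓ _ (hT.tree.twinned σ h), haΓ σ h]
      exact hT.compl_dagger σ h hsucc
    · obtain ⟨s, hs⟩ := Ordinal.lt_omega0.1 hρfin
      rcases s with _ | t
      · exfalso
        rw [Nat.cast_zero] at hs
        rw [append_len, hs, add_zero] at hsucc
        exact not_isSucc_of_isLimit hlim hsucc
      · have hρ1 : ρ.len = (t : Ordinal) + 1 := by rw [hs, Nat.cast_succ]
        have hρ'len : (ρ.restrict t).len < Ordinal.omega0 := by
          rw [restrict_len]; exact Ordinal.nat_lt_omega0 t
        rw [snoc_decomp hρ1, dagger_append_snoc]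
        cases hb : ρ.val (t : Ordinal) with
        | false =>
          simp only [Bool.not_false]
          exact (heq.2 (ρ.restrict t) hρ'len).2
        | true =>
          simp only [Bool.not_true]
          rw [(heq.2 (ρ.restrict t) hρ'len).2, compl_compl]
  · -- branch_coherent
    intro y hy
    by_cases hcase : ∀ β ∈ branchDomain (Γ ∪ appendSet x) y, y.restrict (β + 1) ∈ Γ
    · intro α β hαβ hβD
      have hβΓ : y.restrict (β + 1) ∈ Γ := hcase β hβD
      obtain ⟨F, hF, hc⟩ := hT.branch_coherent y hy α β hαβ ⟨hβD.1, hβΓ⟩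
      have hval : ∀ γ, γ ≤ β → branchSeq a' y γ = branchSeq a y γ := by
        intro γ hγ
        show a' _ = a _
        apply haΓ
        have h1 := hT.tree.downward _ hβΓ (γ + 1)
          (by rw [restrict_len]; exact add_le_add hγ le_rfl)
        rwa [restrict_restrict y (add_le_add hγ le_rfl)] at h1
      refine ⟨F, hF, ?_⟩
      rw [hval α hαβ, hval β le_rfl,
        unionFin_congr (fun γ hγ => hval γ ((hF γ hγ).le.trans hαβ))]
      exact hc
    · push_neg at hcase
      obtain ⟨β₀, hβ₀D, hβ₀n⟩ := hcase
      have hyx : ∀ γ < x.len, y.val γ = x.val γ := by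
        rcases hβ₀D.2 with h | h
        · exact absurd h hβ₀n
        · obtain ⟨σ, hσfin, hσ⟩ := h
          intro γ hγ
          have hγβ : γ < β₀ + 1 := lt_of_lt_of_le hγ (by
            have h2 := congrArg Node.len hσ
            rw [restrict_len, append_len] at h2
            rw [h2]
            exact le_add_of_nonneg_right (zero_le (a := _)))
          have h1 : (y.restrict (β₀ + 1)).val γ = y.val γ := restrict_val_lt hγβ
          rw [hσ, append_val_lt hγ] at h1
          exact h1.symm
      intro α β hαβ hβD
      rcases lt_or_ge β x.len with hβx | hβx
      · have hαx : α < x.len := lt_of_le_of_lt hαβ hβx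
        obtain ⟨F, hF, hc⟩ := hT.branch_coherent x hcount.le α β hαβ
          (branchDomain_x hx hlim hβx)
        refine ⟨F, hF, ?_⟩
        rw [(oldVal hx hlim haΓ hyx hαx).2.2, (oldVal hx hlim haΓ hyx hβx).2.2,
          unionFin_congr (fun γ hγ => (oldVal hx hlim haΓ hyx ((hF γ hγ).trans hαx)).2.2)]
        exact hc
      · obtain ⟨m, rfl⟩ := newIndex hT hx hlim hyx hβD hβx
        rcases lt_or_ge α x.len with hαx | hαx
        · -- old vs new
          have hcell : ∀ j, cSeq a x eb j ⊆ branchSeq a' y (x.len + m) ∨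
              ∀ p ∈ cSeq a x eb j, p ∉ branchSeq a' y (x.len + m) := by
            cases hb : y.val (x.len + (m : Ordinal)) with
            | false =>
              rw [newVal_false heq hyx hb]
              exact CsSet_cellSplit e π a x eb _
            | true =>
              rw [newVal_true heq hyx hb]
              exact cellSplit_compl (CsSet_cellSplit e π a x eb _)
          obtain ⟨F, hF, hc⟩ := cohNewOld hT hx hcount hlim hebinj hebran hebsurj hαx hcell
          refine ⟨F, hF, ?_⟩
          rw [(oldVal hx hlim haΓ hyx hαx).2.2,
            unionFin_congr (fun γ hγ => (oldVal hx hlim haΓ hyx ((hF γ hγ).trans hαx)).2.2)]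
          exact hc
        · -- new vs new
          obtain ⟨δ, rfl⟩ : ∃ δ, α = x.len + δ :=
            ⟨α - x.len, (Ordinal.add_sub_cancel_of_le hαx).symm⟩
          have hδ : δ ≤ (m : Ordinal) := by rwa [add_le_add_iff_left] at hαβ
          obtain ⟨d, rfl⟩ := Ordinal.lt_omega0.1 (lt_of_le_of_lt hδ (Ordinal.nat_lt_omega0 m))
          rcases eq_or_lt_of_le hδ with h1 | h1
          · refine ⟨∅, by simp, Or.inr ?_⟩
            rw [h1]
            exact subset_union_left
          · have hdm : d < m := by exact_mod_cast h1
            have hdis := newNewDisjoint heq hyx hdm (y := y)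
            refine ⟨∅, by simp, ?_⟩
            cases hb : y.val (x.len + (m : Ordinal)) with
            | false =>
              left
              rw [newVal_false heq hyx hb]
              intro p hp
              exact absurd hp.2 (hdis p hp.1)
            | true =>
              right
              rw [newVal_true heq hyx hb]
              intro p hp
              exact Or.inl (hdis p hp)
  · -- branch_proper
    intro y hy
    by_cases hcase : ∀ β ∈ branchDomain (Γ ∪ appendSet x) y, y.restrict (β + 1) ∈ Γ
    · intro β hβD F hF
      have hβΓ : y.restrict (β + 1) ∈ Γ := hcase β hβD
      have hval : ∀ γ, γ ≤ β → branchSeq a' y γ = branchSeq a y γ := by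
        intro γ hγ
        show a' _ = a _
        apply haΓ
        have h1 := hT.tree.downward _ hβΓ (γ + 1)
          (by rw [restrict_len]; exact add_le_add hγ le_rfl)
        rwa [restrict_restrict y (add_le_add hγ le_rfl)] at h1
      rw [hval β le_rfl, unionFin_congr (fun γ hγ => hval γ (hF γ hγ).le)]
      exact hT.branch_proper y hy β ⟨hβD.1, hβΓ⟩ F hF
    · push_neg at hcase
      obtain ⟨β₀, hβ₀D, hβ₀n⟩ := hcase
      have hyx : ∀ γ < x.len, y.val γ = x.val γ := by
        rcases hβ₀D.2 with h | h
        · exact absurd h hβ₀n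
        · obtain ⟨σ, hσfin, hσ⟩ := h
          intro γ hγ
          have hγβ : γ < β₀ + 1 := lt_of_lt_of_le hγ (by
            have h2 := congrArg Node.len hσ
            rw [restrict_len, append_len] at h2
            rw [h2]
            exact le_add_of_nonneg_right (zero_le (a := _)))
          have h1 : (y.restrict (β₀ + 1)).val γ = y.val γ := restrict_val_lt hγβ
          rw [hσ, append_val_lt hγ] at h1
          exact h1.symm
      intro β hβD F hF
      rcases lt_or_ge β x.len with hβx | hβx
      · rw [(oldVal hx hlim haΓ hyx hβx).2.2,
          unionFin_congr (fun γ hγ => (oldVal hx hlim haΓ hyx ((hF γ hγ).trans hβx)).2.2)]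
        exact hT.branch_proper x hcount.le β (branchDomain_x hx hlim hβx) F hF
      · obtain ⟨m, rfl⟩ := newIndex hT hx hlim hyx hβD hβx
        exact properNew hx hlim hebsurj he hL haΓ heq hyx m F hF

end
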